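/- arXiv:1804.07833 — 5 statements merged into one kernel-verified Lean document; each statement's English description precedes it below -/
import Mathlib

section
/- Fix p > 0, σ > 0 and β ∈ (0,1). Let u ~ Gamma(p, σ), ζ ~ Beta(pβ, p(1-β)) and w ~ Gamma(p(1-β), σ) be independent, and set v = ζu + w. Then the joint law of (u, v) on ℝ² is symmetric, i.e., (u, v) has the same law as (v, u). -/
open MeasureTheory ProbabilityTheory

/-- The gamma distribution with shape `p > 0` and scale `σ > 0`. -/
noncomputable def gammaM (p σ : ℝ) : Measure ℝ :=
  MeasureTheory.volume.withDensity (fun t => ENNReal.ofReal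
    (if 0 < t then (σ * Real.Gamma p)⁻¹ * (t / σ) ^ (p - 1) * Real.exp (-t / σ) else 0))

/-- The beta distribution on `(0,1)` with parameters `a, b > 0`. -/
noncomputable def betaM (a b : ℝ) : Measure ℝ :=
  MeasureTheory.volume.withDensity (fun t => ENNReal.ofReal
    (if 0 < t ∧ t < 1 then
      Real.Gamma (a + b) / (Real.Gamma a * Real.Gamma b) * t ^ (a - 1) * (1 - t) ^ (b - 1)
    else 0))

namespace RCARAux

noncomputable def gden (p σ : ℝ) : ℝ → ENNReal := fun t => ENNReal.ofReal
    (if 0 < t then (σ * Real.Gamma p)⁻¹ * (t / σ) ^ (p - 1) * Real.exp (-t / σ) else 0)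

noncomputable def bden (a b : ℝ) : ℝ → ENNReal := fun t => ENNReal.ofReal
    (if 0 < t ∧ t < 1 then
      Real.Gamma (a + b) / (Real.Gamma a * Real.Gamma b) * t ^ (a - 1) * (1 - t) ^ (b - 1)
    else 0)

lemma gammaM_eq (p σ : ℝ) : gammaM p σ = MeasureTheory.volume.withDensity (gden p σ) := rfl

lemma betaM_eq (a b : ℝ) : betaM a b = MeasureTheory.volume.withDensity (bden a b) := rfl

lemma measurable_gden (p σ : ℝ) : Measurable (gden p σ) := by
  apply ENNReal.measurable_ofReal.comp
  apply Measurable.ite measurableSet_Ioi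
  · exact (((measurable_id.div_const σ).pow_const (p-1)).const_mul _).mul
      (measurable_id.neg.div_const σ).exp
  · exact measurable_const

lemma measurable_bden (a b : ℝ) : Measurable (bden a b) := by
  apply ENNReal.measurable_ofReal.comp
  apply Measurable.ite
  · exact (measurableSet_lt measurable_const measurable_id).inter
      (measurableSet_lt measurable_id measurable_const)
  · exact ((measurable_id.pow_const (a-1)).const_mul _).mul
      ((measurable_const.sub measurable_id).pow_const (b-1))
  · exact measurable_const

noncomputable def Cd (p σ β : ℝ) : ℝ :=
  (σ * Real.Gamma p)⁻¹ *
    (Real.Gamma (p * β + p * (1 - β)) / (Real.Gamma (p * β) * Real.Gamma (p * (1 - β)))) *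
    (σ * Real.Gamma (p * (1 - β)))⁻¹ * σ⁻¹

noncomputable def Dker (p σ β : ℝ) (a v x : ℝ) : ENNReal :=
  ENNReal.ofReal (if 0 < x ∧ x < a ∧ x < v then
    Cd p σ β * (x / σ) ^ (p * β - 1) * ((a - x) / σ) ^ (p * (1 - β) - 1)
      * ((v - x) / σ) ^ (p * (1 - β) - 1) * Real.exp ((x - a - v) / σ)
  else 0)

noncomputable def Kker (p σ β : ℝ) (a v : ℝ) : ENNReal := ∫⁻ x, Dker p σ β a v x

lemma measurable_Dker (p σ β : ℝ) :
    Measurable (fun t : (ℝ × ℝ) × ℝ => Dker p σ β t.1.1 t.1.2 t.2) := by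
  apply ENNReal.measurable_ofReal.comp
  apply Measurable.ite
  · exact (measurableSet_lt measurable_const measurable_snd).inter
      ((measurableSet_lt measurable_snd measurable_fst.fst).inter
        (measurableSet_lt measurable_snd measurable_fst.snd))
  · refine Measurable.mul (Measurable.mul (Measurable.mul ?_ ?_) ?_) ?_
    · exact ((measurable_snd.div_const σ).pow_const _).const_mul _
    · exact ((measurable_fst.fst.sub measurable_snd).div_const σ).pow_const _
    · exact ((measurable_fst.snd.sub measurable_snd).div_const σ).pow_const _
    · exact (((measurable_snd.sub measurable_fst.fst).sub measurable_fst.snd).div_const σ).exp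
  · exact measurable_const

lemma measurable_Kker (p σ β : ℝ) :
    Measurable (fun y : ℝ × ℝ => Kker p σ β y.1 y.2) :=
  Measurable.lintegral_prod_right' (measurable_Dker p σ β)

lemma Dker_symm (p σ β : ℝ) (a v x : ℝ) : Dker p σ β a v x = Dker p σ β v a x := by
  unfold Dker
  congr 1
  by_cases h : 0 < x ∧ x < a ∧ x < v
  · rw [if_pos h, if_pos ⟨h.1, h.2.2, h.2.1⟩]
    have : (x - a - v) = (x - v - a) := by ring
    rw [this]; ring
  · rw [if_neg h, if_neg (fun h' => h ⟨h'.1, h'.2.2, h'.2.1⟩)]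

lemma Kker_symm (p σ β : ℝ) (a v : ℝ) : Kker p σ β a v = Kker p σ β v a :=
  lintegral_congr fun x => Dker_symm p σ β a v x

lemma Dker_zero (p σ β : ℝ) {a : ℝ} (ha : a ≤ 0) (v x : ℝ) : Dker p σ β a v x = 0 := by
  unfold Dker
  rw [if_neg, ENNReal.ofReal_zero]
  rintro ⟨h1, h2, -⟩
  exact absurd (h1.trans h2) (not_lt.2 ha)

lemma gden_zero (p σ : ℝ) {a : ℝ} (ha : a ≤ 0) : gden p σ a = 0 := by
  unfold gden
  rw [if_neg (not_lt.2 ha), ENNReal.ofReal_zero]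


lemma real_identity (p σ β : ℝ) (hσ : 0 < σ)
    {a x v : ℝ} (ha : 0 < a) (hx : 0 < x) (hxa : x < a) (hxv : x < v) :
    ((σ * Real.Gamma p)⁻¹ * (a / σ) ^ (p - 1) * Real.exp (-a / σ)) * a⁻¹ *
      ((Real.Gamma (p * β + p * (1 - β)) / (Real.Gamma (p * β) * Real.Gamma (p * (1 - β)))) *
        (x / a) ^ (p * β - 1) * (1 - x / a) ^ (p * (1 - β) - 1) *
      ((σ * Real.Gamma (p * (1 - β)))⁻¹ * ((v - x) / σ) ^ (p * (1 - β) - 1) *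
        Real.exp (-(v - x) / σ)))
    = Cd p σ β * (x / σ) ^ (p * β - 1) * ((a - x) / σ) ^ (p * (1 - β) - 1)
        * ((v - x) / σ) ^ (p * (1 - β) - 1) * Real.exp ((x - a - v) / σ) := by
  have hA : (0:ℝ) < a / σ := div_pos ha hσ
  have h2 : x / a = (x / σ) / (a / σ) := by
    rw [div_div_div_cancel_right₀]
    exact hσ.ne'
  have h1 : 1 - x / a = ((a - x) / σ) / (a / σ) := by
    rw [div_div_div_cancel_right₀]
    · field_simp
    · exact hσ.ne'
  have hsplit : (a / σ) ^ (p - 1) =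
      (a / σ) ^ (p * β - 1) * ((a / σ) ^ (p * (1 - β) - 1) * (a / σ)) := by
    have e : p - 1 = (p * β - 1) + ((p * (1 - β) - 1) + 1) := by ring
    rw [e, Real.rpow_add hA, Real.rpow_add hA, Real.rpow_one]
  have hexp : Real.exp ((x - a - v) / σ) = Real.exp (-a / σ) * Real.exp (-(v - x) / σ) := by
    rw [← Real.exp_add]
    congr 1
    ring
  have hne1 : (a / σ) ^ (p * β - 1) ≠ 0 := (Real.rpow_pos_of_pos hA _).ne'
  have hne2 : (a / σ) ^ (p * (1 - β) - 1) ≠ 0 := (Real.rpow_pos_of_pos hA _).ne'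
  have key : (a / σ) ^ (p - 1) * a⁻¹ * ((a / σ) ^ (p * β - 1))⁻¹ *
      ((a / σ) ^ (p * (1 - β) - 1))⁻¹ = σ⁻¹ := by
    rw [hsplit]
    field_simp
  rw [h1, h2, Real.div_rpow (by positivity) hA.le,
    Real.div_rpow (div_nonneg (sub_nonneg.2 hxa.le) hσ.le) hA.le, hexp, Cd]
  linear_combination ((σ * Real.Gamma p)⁻¹ *
    (Real.Gamma (p * β + p * (1 - β)) / (Real.Gamma (p * β) * Real.Gamma (p * (1 - β)))) *
    (σ * Real.Gamma (p * (1 - β)))⁻¹ * (x / σ) ^ (p * β - 1) * ((a - x) / σ) ^ (p * (1 - β) - 1)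
    * ((v - x) / σ) ^ (p * (1 - β) - 1) * Real.exp (-a / σ) * Real.exp (-(v - x) / σ)) * key

lemma density_eq (p σ β : ℝ) (hp : 0 < p) (hσ : 0 < σ) (hβ : β ∈ Set.Ioo (0:ℝ) 1)
    {a : ℝ} (ha : 0 < a) (v x : ℝ) :
    gden p σ a * ENNReal.ofReal a⁻¹ *
      (bden (p * β) (p * (1 - β)) (x / a) * gden (p * (1 - β)) σ (v - x))
      = Dker p σ β a v x := by
  obtain ⟨hβ0, hβ1⟩ := hβ
  have h1β : (0:ℝ) < 1 - β := by linarith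
  have hq : 0 < p * (1 - β) := by positivity
  have hpb : 0 < p * β := by positivity
  have hΓp : 0 < Real.Gamma p := Real.Gamma_pos_of_pos hp
  have hΓq : 0 < Real.Gamma (p * (1 - β)) := Real.Gamma_pos_of_pos hq
  have hΓb : 0 < Real.Gamma (p * β) := Real.Gamma_pos_of_pos hpb
  have hΓs : 0 < Real.Gamma (p * β + p * (1 - β)) := Real.Gamma_pos_of_pos (by positivity)
  by_cases h : 0 < x ∧ x < a ∧ x < v
  · obtain ⟨hx0, hxa, hxv⟩ := h
    have hζc : 0 < x / a ∧ x / a < 1 := ⟨div_pos hx0 ha, (div_lt_one ha).mpr hxa⟩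
    have hwc : 0 < v - x := sub_pos.mpr hxv
    have hb2 : (0:ℝ) ≤ Real.Gamma (p * β + p * (1 - β)) /
        (Real.Gamma (p * β) * Real.Gamma (p * (1 - β))) * (x / a) ^ (p * β - 1) *
        (1 - x / a) ^ (p * (1 - β) - 1) :=
      mul_nonneg (mul_nonneg (by positivity) (Real.rpow_nonneg (by positivity) _))
        (Real.rpow_nonneg (by linarith [hζc.2]) _)
    rw [gden, bden, gden, Dker, if_pos ha, if_pos hζc, if_pos hwc, if_pos ⟨hx0, hxa, hxv⟩]
    rw [← ENNReal.ofReal_mul (by positivity), ← ENNReal.ofReal_mul hb2,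
      ← ENNReal.ofReal_mul (by positivity)]
    exact congrArg ENNReal.ofReal (real_identity p σ β hσ ha hx0 hxa hxv)
  · rw [Dker, if_neg h, ENNReal.ofReal_zero]
    by_cases h1 : 0 < x
    · by_cases h2 : x < a
      · have h3 : ¬ x < v := fun h3 => h ⟨h1, h2, h3⟩
        have hnc : ¬ (0 < v - x) := fun hc => h3 (by linarith)
        simp only [gden]
        rw [if_neg hnc, ENNReal.ofReal_zero, mul_zero, mul_zero]
      · have hnc : ¬ (0 < x / a ∧ x / a < 1) := fun hc => h2 ((div_lt_one ha).mp hc.2)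
        simp only [bden]
        rw [if_neg hnc, ENNReal.ofReal_zero, zero_mul, mul_zero]
    · have hnc : ¬ (0 < x / a ∧ x / a < 1) := by
        rintro ⟨hc, -⟩
        refine h1 ?_
        have := mul_pos hc ha
        rwa [div_mul_cancel₀ _ ha.ne'] at this
      simp only [bden]
      rw [if_neg hnc, ENNReal.ofReal_zero, zero_mul, mul_zero]


lemma lintegral_scale (G : ℝ → ENNReal) (hG : Measurable G) (a : ℝ) (ha : a ≠ 0) :
    ∫⁻ z, G (a * z) ∂volume = ENNReal.ofReal |a⁻¹| * ∫⁻ x, G x ∂volume := by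
  rw [← lintegral_map hG (measurable_const_mul a), Real.map_volume_mul_left ha,
    lintegral_smul_measure, smul_eq_mul]

lemma core_general (gu gz gw : ℝ → ENNReal)
    (hgu : Measurable gu) (hgz : Measurable gz) (hgw : Measurable gw)
    (D : ℝ → ℝ → ℝ → ENNReal)
    (hD : Measurable fun t : (ℝ × ℝ) × ℝ => D t.1.1 t.1.2 t.2)
    (hgu0 : ∀ a : ℝ, a ≤ 0 → gu a = 0)
    (hD0 : ∀ a : ℝ, a ≤ 0 → ∀ v x : ℝ, D a v x = 0)
    (hrel : ∀ a : ℝ, 0 < a → ∀ v x : ℝ,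
      gu a * ENNReal.ofReal a⁻¹ * (gz (x / a) * gw (v - x)) = D a v x)
    (f : ℝ × ℝ → ENNReal) (hf : Measurable f) :
    ∫⁻ t, f (t.1.1, t.1.2 * t.1.1 + t.2)
        ∂(((volume.withDensity gu).prod (volume.withDensity gz)).prod (volume.withDensity gw))
      = ∫⁻ a, ∫⁻ v, (f (a, v) * ∫⁻ x, D a v x) := by
  have hF : Measurable fun t : (ℝ × ℝ) × ℝ => f (t.1.1, t.1.2 * t.1.1 + t.2) :=
    hf.comp ((measurable_fst.fst).prodMk
      ((measurable_fst.snd.mul measurable_fst.fst).add measurable_snd))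
  -- peel off the w coordinate
  rw [lintegral_prod _ hF.aemeasurable]
  have step1 : ∀ y : ℝ × ℝ, ∫⁻ c, f (y.1, y.2 * y.1 + c) ∂(volume.withDensity gw)
      = ∫⁻ c, gw c * f (y.1, y.2 * y.1 + c) ∂volume := by
    intro y
    have hmc : Measurable fun c : ℝ => f (y.1, y.2 * y.1 + c) :=
      hf.comp (measurable_const.prodMk (measurable_const.add measurable_id))
    rw [lintegral_withDensity_eq_lintegral_mul _ hgw hmc]
    simp only [Pi.mul_apply]
  rw [lintegral_congr step1]
  -- peel off the (u, z) coordinates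
  have hΦ2 : Measurable fun y : ℝ × ℝ => ∫⁻ c, gw c * f (y.1, y.2 * y.1 + c) ∂volume :=
    Measurable.lintegral_prod_right' ((hgw.comp measurable_snd).mul hF)
  rw [lintegral_prod _ hΦ2.aemeasurable]
  have step2 : ∀ a : ℝ, ∫⁻ z, ∫⁻ c, gw c * f (a, z * a + c) ∂volume ∂(volume.withDensity gz)
      = ∫⁻ z, gz z * ∫⁻ c, gw c * f (a, z * a + c) ∂volume ∂volume := by
    intro a
    have hmz : Measurable fun z : ℝ => ∫⁻ c, gw c * f (a, z * a + c) ∂volume :=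
      hΦ2.comp (measurable_const.prodMk measurable_id)
    rw [lintegral_withDensity_eq_lintegral_mul _ hgz hmz]
    simp only [Pi.mul_apply]
  rw [lintegral_congr step2]
  have hΦ1 : Measurable fun a : ℝ => ∫⁻ z, gz z * ∫⁻ c, gw c * f (a, z * a + c) ∂volume ∂volume :=
    Measurable.lintegral_prod_right' ((hgz.comp measurable_snd).mul
      (hΦ2.comp (measurable_fst.prodMk measurable_snd)))
  rw [lintegral_withDensity_eq_lintegral_mul _ hgu hΦ1]
  simp only [Pi.mul_apply]
  refine lintegral_congr fun a => ?_
  by_cases ha : 0 < a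
  · -- translation step
    have t1 : ∀ z : ℝ, ∫⁻ c, gw c * f (a, z * a + c) ∂volume
        = ∫⁻ v, gw (v - z * a) * f (a, v) ∂volume := by
      intro z
      have h := lintegral_add_right_eq_self (μ := volume)
        (fun v => gw (v - z * a) * f (a, v)) (z * a)
      simp only [add_sub_cancel_right] at h
      rw [← h]
      exact lintegral_congr fun c => by rw [add_comm (z * a) c]
    rw [lintegral_congr fun z => by rw [t1 z]]
    -- scaling step
    have hΦm : Measurable fun x : ℝ => ∫⁻ v, gw (v - x) * f (a, v) ∂volume :=
      Measurable.lintegral_prod_right' ((hgw.comp (measurable_snd.sub measurable_fst)).mul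
        (hf.comp (measurable_const.prodMk measurable_snd)))
    have hGm : Measurable fun x : ℝ => gz (x / a) * ∫⁻ v, gw (v - x) * f (a, v) ∂volume :=
      (hgz.comp (measurable_id.div_const a)).mul hΦm
    have t2 := lintegral_scale
      (fun x : ℝ => gz (x / a) * ∫⁻ v, gw (v - x) * f (a, v) ∂volume) hGm a (ne_of_gt ha)
    have t2' : ∫⁻ z, gz z * ∫⁻ v, gw (v - z * a) * f (a, v) ∂volume ∂volume
        = ENNReal.ofReal |a⁻¹|
            * ∫⁻ x, gz (x / a) * ∫⁻ v, gw (v - x) * f (a, v) ∂volume ∂volume := by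
      rw [← t2]
      refine lintegral_congr fun z => ?_
      simp only [mul_div_cancel_left₀ _ (ne_of_gt ha), mul_comm a z,
        mul_div_cancel_right₀ _ (ne_of_gt ha)]
    rw [t2']
    -- swap the x and v integrals
    have hin1 : Measurable fun v : ℝ => gw (v - _root_.id a) * f (a, v) := by
      exact (hgw.comp (measurable_id.sub_const _)).mul
        (hf.comp (measurable_const.prodMk measurable_id))
    have hswap : ∫⁻ x, gz (x / a) * ∫⁻ v, gw (v - x) * f (a, v) ∂volume ∂volume
        = ∫⁻ v, (∫⁻ x, gz (x / a) * gw (v - x) ∂volume) * f (a, v) ∂volume := by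
      have hunc : Measurable (Function.uncurry
          fun x v : ℝ => gz (x / a) * (gw (v - x) * f (a, v))) :=
        (hgz.comp (measurable_fst.div_const a)).mul
          ((hgw.comp (measurable_snd.sub measurable_fst)).mul
            (hf.comp (measurable_const.prodMk measurable_snd)))
      calc ∫⁻ x, gz (x / a) * ∫⁻ v, gw (v - x) * f (a, v) ∂volume ∂volume
          = ∫⁻ x, ∫⁻ v, gz (x / a) * (gw (v - x) * f (a, v)) ∂volume ∂volume := by
            refine lintegral_congr fun x => ?_
            exact (lintegral_const_mul _ ((hgw.comp (measurable_id.sub_const x)).mul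
              (hf.comp (measurable_const.prodMk measurable_id)))).symm
        _ = ∫⁻ v, ∫⁻ x, gz (x / a) * (gw (v - x) * f (a, v)) ∂volume ∂volume :=
            lintegral_lintegral_swap hunc.aemeasurable
        _ = ∫⁻ v, (∫⁻ x, gz (x / a) * gw (v - x) ∂volume) * f (a, v) ∂volume := by
            refine lintegral_congr fun v => ?_
            simp_rw [← mul_assoc]
            exact lintegral_mul_const _ ((hgz.comp (measurable_id.div_const a)).mul
              (hgw.comp (measurable_const.sub measurable_id)))
    rw [hswap]
    have hIm : Measurable fun v : ℝ => (∫⁻ x, gz (x / a) * gw (v - x) ∂volume) * f (a, v) :=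
      (Measurable.lintegral_prod_right' ((hgz.comp (measurable_snd.div_const a)).mul
        (hgw.comp (measurable_fst.sub measurable_snd)))).mul
        (hf.comp (measurable_const.prodMk measurable_id))
    rw [← lintegral_const_mul _ hIm, ← lintegral_const_mul _ (hIm.const_mul _)]
    refine lintegral_congr fun v => ?_
    rw [abs_of_pos (inv_pos.mpr ha)]
    have hmul : gu a * (ENNReal.ofReal a⁻¹ * ∫⁻ x, gz (x / a) * gw (v - x) ∂volume)
        = ∫⁻ x, D a v x := by
      have hin2 : Measurable fun x : ℝ => gz (x / a) * gw (v - x) :=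
        (hgz.comp (measurable_id.div_const a)).mul
          (hgw.comp (measurable_const.sub measurable_id))
      rw [← lintegral_const_mul _ hin2, ← lintegral_const_mul _ (hin2.const_mul _)]
      exact lintegral_congr fun x => by rw [← mul_assoc]; exact hrel a ha v x
    calc gu a * (ENNReal.ofReal a⁻¹ * ((∫⁻ x, gz (x / a) * gw (v - x) ∂volume) * f (a, v)))
        = f (a, v) * (gu a * (ENNReal.ofReal a⁻¹ * ∫⁻ x, gz (x / a) * gw (v - x) ∂volume)) := by
          ring
      _ = f (a, v) * ∫⁻ x, D a v x := by rw [hmul]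
  · have ha' : a ≤ 0 := le_of_not_gt ha
    rw [hgu0 a ha', zero_mul]
    symm
    have hz : ∀ v : ℝ, f (a, v) * ∫⁻ x, D a v x = 0 := fun v => by
      rw [lintegral_congr (fun x => hD0 a ha' v x), lintegral_zero, mul_zero]
    rw [lintegral_congr hz, lintegral_zero]

end RCARAux

open RCARAux in
/-- Detailed balance of the RCAR kernel with respect to the gamma distribution: if `u ~ Gamma(p, σ)`,
`ζ ~ Beta(pβ, p(1-β))` and `w ~ Gamma(p(1-β), σ)` are independent and
`v = ζ u + w`, then the joint law of `(u, v)` is symmetric: `(u, v)` has the same law as `(v, u)`. -/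
theorem rcar_gamma_detailed_balance {Ω : Type*} [MeasurableSpace Ω] (P : Measure Ω)
    [IsProbabilityMeasure P]
    (p σ β : ℝ) (hp : 0 < p) (hσ : 0 < σ) (hβ : β ∈ Set.Ioo (0:ℝ) 1)
    (u ζ w : Ω → ℝ) (hu : Measurable u) (hζ : Measurable ζ) (hw : Measurable w)
    (hind : iIndepFun ![u, ζ, w] P)
    (hulaw : Measure.map u P = gammaM p σ)
    (hζlaw : Measure.map ζ P = betaM (p * β) (p * (1 - β)))
    (hwlaw : Measure.map w P = gammaM (p * (1 - β)) σ) :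
    Measure.map (fun ω => (u ω, ζ ω * u ω + w ω)) P = Measure.map (fun ω => (ζ ω * u ω + w ω, u ω)) P := by
  classical
  have mF : Measurable fun ω => (u ω, ζ ω * u ω + w ω) := hu.prodMk ((hζ.mul hu).add hw)
  have mG : Measurable fun ω => (ζ ω * u ω + w ω, u ω) := ((hζ.mul hu).add hw).prodMk hu
  have hm3 : ∀ i, Measurable (![u, ζ, w] i) := by
    intro i; fin_cases i <;> assumption
  have h12 : IndepFun u ζ P := hind.indepFun (show (0 : Fin 3) ≠ 1 by decide)
  have h123 : IndepFun (fun ω => (u ω, ζ ω)) w P :=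
    hind.indepFun_prodMk hm3 0 1 2 (by decide) (by decide)
  have hT : Measurable fun ω => ((u ω, ζ ω), w ω) := (hu.prodMk hζ).prodMk hw
  have hlaw : Measure.map (fun ω => ((u ω, ζ ω), w ω)) P
      = ((volume.withDensity (gden p σ)).prod
          (volume.withDensity (bden (p * β) (p * (1 - β))))).prod
          (volume.withDensity (gden (p * (1 - β)) σ)) := by
    rw [(ProbabilityTheory.indepFun_iff_map_prod_eq_prod_map_map
        (hu.prodMk hζ).aemeasurable hw.aemeasurable).mp h123,
      (ProbabilityTheory.indepFun_iff_map_prod_eq_prod_map_map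
        hu.aemeasurable hζ.aemeasurable).mp h12, hulaw, hζlaw, hwlaw]
    rfl
  have key : ∀ f : ℝ × ℝ → ENNReal, Measurable f →
      ∫⁻ ω, f (u ω, ζ ω * u ω + w ω) ∂P
        = ∫⁻ a, ∫⁻ v, f (a, v) * Kker p σ β a v ∂volume ∂volume := by
    intro f hf
    have hF' : Measurable fun t : (ℝ × ℝ) × ℝ => f (t.1.1, t.1.2 * t.1.1 + t.2) :=
      hf.comp ((measurable_fst.fst).prodMk
        ((measurable_fst.snd.mul measurable_fst.fst).add measurable_snd))
    calc ∫⁻ ω, f (u ω, ζ ω * u ω + w ω) ∂P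
        = ∫⁻ t, f (t.1.1, t.1.2 * t.1.1 + t.2)
            ∂(Measure.map (fun ω => ((u ω, ζ ω), w ω)) P) := (lintegral_map hF' hT).symm
      _ = ∫⁻ a, ∫⁻ v, f (a, v) * Kker p σ β a v ∂volume ∂volume := by
          rw [hlaw]
          exact core_general _ _ _ (measurable_gden p σ)
            (measurable_bden (p * β) (p * (1 - β))) (measurable_gden (p * (1 - β)) σ)
            (Dker p σ β) (measurable_Dker p σ β)
            (fun a ha => gden_zero p σ ha)
            (fun a ha v x => Dker_zero p σ β ha v x)
            (fun a ha v x => density_eq p σ β hp hσ hβ ha v x) f hf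
  have key2 : ∀ f : ℝ × ℝ → ENNReal, Measurable f →
      ∫⁻ ω, f (ζ ω * u ω + w ω, u ω) ∂P
        = ∫⁻ a, ∫⁻ v, f (a, v) * Kker p σ β a v ∂volume ∂volume := by
    intro f hf
    have h1 := key (fun y => f (y.2, y.1)) (hf.comp (measurable_snd.prodMk measurable_fst))
    rw [h1]
    have hunc : AEMeasurable (Function.uncurry fun a v : ℝ => f (v, a) * Kker p σ β a v)
        (volume.prod volume) :=
      ((hf.comp (measurable_snd.prodMk measurable_fst)).mul (measurable_Kker p σ β)).aemeasurable
    rw [lintegral_lintegral_swap hunc]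
    exact lintegral_congr fun X => lintegral_congr fun Y => by rw [Kker_symm p σ β Y X]
  ext s hs
  rw [Measure.map_apply mF hs, Measure.map_apply mG hs]
  have hse1 : P ((fun ω => (u ω, ζ ω * u ω + w ω)) ⁻¹' s)
      = ∫⁻ ω, s.indicator 1 (u ω, ζ ω * u ω + w ω) ∂P := by
    rw [← lintegral_indicator_one (mF hs)]
    exact lintegral_congr fun ω => by simp [Set.indicator_apply, Set.mem_preimage]
  have hse2 : P ((fun ω => (ζ ω * u ω + w ω, u ω)) ⁻¹' s)
      = ∫⁻ ω, s.indicator 1 (ζ ω * u ω + w ω, u ω) ∂P := by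
    rw [← lintegral_indicator_one (mG hs)]
    exact lintegral_congr fun ω => by simp [Set.indicator_apply, Set.mem_preimage]
  rw [hse1, hse2, key _ (measurable_one.indicator hs), key2 _ (measurable_one.indicator hs)]
end

section
/- Fix β ∈ (0,1). Let u, w be independent Exp(1) random variables, ζ ~ Bernoulli(1-β) independent of both, and let v = βu + ζw. Then the conditional law of u given v is the law of min{v/β, η/(1-β)} where η ~ Exp(1) is independent of v. -/
open MeasureTheory ProbabilityTheory Real Set
open scoped ENNReal

/-- The exponential distribution with scale `σ > 0`. -/
noncomputable def expM (σ : ℝ) : Measure ℝ :=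
  MeasureTheory.volume.withDensity (fun t => ENNReal.ofReal
    (if 0 < t then σ⁻¹ * Real.exp (-t / σ) else 0))

/-- The Bernoulli distribution on `ℝ`, taking value `1` with probability `q` and `0` otherwise. -/
noncomputable def bernM (q : ℝ) : Measure ℝ :=
  ENNReal.ofReal (1 - q) • Measure.dirac (0 : ℝ) + ENNReal.ofReal q • Measure.dirac (1 : ℝ)


section helpers

lemma my_lintegral_exp_Ioi {r : ℝ} (hr : 0 < r) (c : ℝ) :
    ∫⁻ x in Ioi c, ENNReal.ofReal (Real.exp (-(r * x))) =
      ENNReal.ofReal (Real.exp (-(r * c)) / r) := by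
  have hi : IntegrableOn (fun x : ℝ => Real.exp (-(r * x))) (Ioi c) := by
    simpa [neg_mul] using exp_neg_integrableOn_Ioi c hr
  rw [← ofReal_integral_eq_lintegral_ofReal hi
    (Filter.Eventually.of_forall fun x => (Real.exp_pos _).le)]
  congr 1
  have h := integral_comp_mul_left_Ioi (fun x => Real.exp (-x)) c hr
  simp only [smul_eq_mul] at h
  calc ∫ x in Ioi c, Real.exp (-(r * x)) = r⁻¹ * ∫ x in Ioi (r * c), Real.exp (-x) := h
    _ = Real.exp (-(r * c)) / r := by rw [integral_exp_neg_Ioi]; ring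

lemma my_intervalIntegral_exp {r : ℝ} (hr : 0 < r) (a b : ℝ) :
    ∫ x in a..b, Real.exp (-(r * x)) = (Real.exp (-(r * a)) - Real.exp (-(r * b))) / r := by
  have hderiv : ∀ x ∈ uIcc a b, HasDerivAt (fun y => -Real.exp (-(r * y)) / r)
      (Real.exp (-(r * x))) x := by
    intro x _
    have h := (ProbabilityTheory.hasDerivAt_neg_exp_mul_exp (r := r) (x := x)).div_const r
    simpa [mul_div_assoc, mul_div_cancel_left₀ _ hr.ne'] using h
  rw [intervalIntegral.integral_eq_sub_of_hasDerivAt hderiv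
    ((Continuous.intervalIntegrable (by continuity) a b))]
  field_simp
  ring

lemma my_lintegral_exp_Ioc {r : ℝ} (hr : 0 < r) {a b : ℝ} (hab : a ≤ b) :
    ∫⁻ x in Ioc a b, ENNReal.ofReal (Real.exp (-(r * x))) =
      ENNReal.ofReal ((Real.exp (-(r * a)) - Real.exp (-(r * b))) / r) := by
  have hi0 : IntegrableOn (fun x : ℝ => Real.exp (-(r * x))) (Ioi a) := by
    simpa [neg_mul] using exp_neg_integrableOn_Ioi a hr
  have hi : IntegrableOn (fun x : ℝ => Real.exp (-(r * x))) (Ioc a b) :=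
    hi0.mono_set Ioc_subset_Ioi_self
  rw [← ofReal_integral_eq_lintegral_ofReal hi
    (Filter.Eventually.of_forall fun x => (Real.exp_pos _).le)]
  congr 1
  rw [← intervalIntegral.integral_of_le hab, my_intervalIntegral_exp hr]


lemma expM_density_eq :
    (fun t : ℝ => ENNReal.ofReal (if 0 < t then (1:ℝ)⁻¹ * Real.exp (-t / 1) else 0)) =
      (Ioi (0:ℝ)).indicator (fun t => ENNReal.ofReal (Real.exp (-t))) := by
  funext t
  by_cases h : 0 < t <;> simp [indicator, h]

lemma expM_apply {s : Set ℝ} (hs : MeasurableSet s) :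
    expM 1 s = ∫⁻ x in Ioi 0 ∩ s, ENNReal.ofReal (Real.exp (-x)) := by
  rw [expM, withDensity_apply _ hs, expM_density_eq,
    lintegral_indicator measurableSet_Ioi, Measure.restrict_restrict measurableSet_Ioi]

lemma expM_Ioi (c : ℝ) : expM 1 (Ioi c) = ENNReal.ofReal (Real.exp (-(max c 0))) := by
  rw [expM_apply measurableSet_Ioi, Ioi_inter_Ioi]
  have := my_lintegral_exp_Ioi (r := 1) one_pos (0 ⊔ c)
  simp only [one_mul, div_one] at this
  rw [this, max_comm, sup_comm]

lemma expM_univ : expM 1 univ = 1 := by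
  rw [expM_apply MeasurableSet.univ, inter_univ]
  have := my_lintegral_exp_Ioi (r := 1) one_pos 0
  simp only [one_mul, div_one, mul_zero, neg_zero, Real.exp_zero] at this
  rw [this, ENNReal.ofReal_one]

instance : IsProbabilityMeasure (expM 1) := ⟨expM_univ⟩

lemma bernM_lintegral (q : ℝ) (h : ℝ → ℝ≥0∞) :
    ∫⁻ z, h z ∂(bernM q) = ENNReal.ofReal (1 - q) * h 0 + ENNReal.ofReal q * h 1 := by
  simp [bernM, lintegral_add_measure, lintegral_smul_measure, lintegral_dirac]

instance (q : ℝ) : IsFiniteMeasure (bernM q) := by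
  constructor
  simp only [bernM, Measure.coe_add, Measure.coe_smul, Pi.add_apply, Pi.smul_apply,
    measure_univ, smul_eq_mul, mul_one]
  exact ENNReal.add_lt_top.mpr ⟨ENNReal.ofReal_lt_top, ENNReal.ofReal_lt_top⟩

lemma harith {β a b : ℝ} (hβ0 : 0 < β) (hβ1 : β < 1) (h : a ≤ β * max b 0) :
    max (max a (β * b)) 0 + max ((1 - β) * b) 0 = max b 0 := by
  rcases le_total b 0 with hb | hb
  · rw [max_eq_right hb] at h ⊢
    rw [mul_zero] at h
    rw [max_eq_right, max_eq_right, add_zero]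
    · exact mul_nonpos_of_nonneg_of_nonpos (by linarith) hb
    · exact max_le h (mul_nonpos_of_nonneg_of_nonpos hβ0.le hb)
  · rw [max_eq_left hb] at h ⊢
    rw [max_eq_right h, max_eq_left (mul_nonneg hβ0.le hb),
      max_eq_left (mul_nonneg (by linarith) hb)]
    ring

lemma harith2 {β a b : ℝ} (hβ0 : 0 < β) (hβ1 : β < 1) (h : β * max b 0 < a) :
    max (max a (β * b)) 0 + max ((1 - β) * b) 0 = a + (1 - β) * max b 0 := by
  have hm0 : (0:ℝ) ≤ max b 0 := le_max_right b 0
  have ha0 : 0 < a := lt_of_le_of_lt (mul_nonneg hβ0.le hm0) h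
  have hba : β * b < a := lt_of_le_of_lt (mul_le_mul_of_nonneg_left (le_max_left b 0) hβ0.le) h
  rw [max_eq_left hba.le, max_eq_left ha0.le]
  rcases le_total b 0 with hb | hb
  · rw [max_eq_right hb, max_eq_right (mul_nonpos_of_nonneg_of_nonpos (by linarith) hb)]
    ring
  · rw [max_eq_left hb, max_eq_left (mul_nonneg (by linarith) hb)]

lemma left_core {β : ℝ} (hβ0 : 0 < β) (hβ1 : β < 1) (a b : ℝ) :
    ((expM 1).prod ((bernM (1 - β)).prod (expM 1)))
      ((fun p : ℝ × ℝ × ℝ => (β * p.1 + p.2.1 * p.2.2, p.1)) ⁻¹' (Ioi a ×ˢ Ioi b))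
    = ENNReal.ofReal (Real.exp (-(max (max a (β * b)) 0 + max ((1 - β) * b) 0))) := by
  have h1β : (0:ℝ) < 1 - β := by linarith
  set m : ℝ := max b 0 with hm
  have hm0 : (0:ℝ) ≤ m := le_max_right b 0
  -- measurability of the preimage
  have hg : Measurable (fun p : ℝ × ℝ × ℝ => (β * p.1 + p.2.1 * p.2.2, p.1)) := by
    exact ((measurable_const.mul measurable_fst).add
      ((measurable_fst.comp measurable_snd).mul (measurable_snd.comp measurable_snd))).prodMk
      measurable_fst
  have hS : MeasurableSet ((fun p : ℝ × ℝ × ℝ => (β * p.1 + p.2.1 * p.2.2, p.1)) ⁻¹'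
      (Ioi a ×ˢ Ioi b)) := hg (measurableSet_Ioi.prod measurableSet_Ioi)
  rw [Measure.prod_apply hS]
  -- inner value
  have hinner : ∀ x : ℝ, ((bernM (1 - β)).prod (expM 1))
      (Prod.mk x ⁻¹' ((fun p : ℝ × ℝ × ℝ => (β * p.1 + p.2.1 * p.2.2, p.1)) ⁻¹'
        (Ioi a ×ˢ Ioi b)))
      = if b < x then (ENNReal.ofReal β * (if a < β * x then 1 else 0)
          + ENNReal.ofReal (1 - β) * ENNReal.ofReal (Real.exp (-(max (a - β * x) 0)))) else 0 := by
    intro x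
    by_cases hx : b < x
    · rw [if_pos hx]
      have hset : Prod.mk x ⁻¹' ((fun p : ℝ × ℝ × ℝ => (β * p.1 + p.2.1 * p.2.2, p.1)) ⁻¹'
          (Ioi a ×ˢ Ioi b)) = {q : ℝ × ℝ | a < β * x + q.1 * q.2} := by
        ext q; simp [hx]
      rw [hset]
      have hTm : MeasurableSet {q : ℝ × ℝ | a < β * x + q.1 * q.2} :=
        measurableSet_lt measurable_const
          (measurable_const.add (measurable_fst.mul measurable_snd))
      rw [Measure.prod_apply hTm]
      have : ∀ z : ℝ, expM 1 (Prod.mk z ⁻¹' {q : ℝ × ℝ | a < β * x + q.1 * q.2})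
          = expM 1 {y : ℝ | a < β * x + z * y} := fun z => rfl
      rw [lintegral_congr (fun z => this z), bernM_lintegral]
      have h0 : expM 1 {y : ℝ | a < β * x + 0 * y} = if a < β * x then 1 else 0 := by
        by_cases hax : a < β * x
        · have : {y : ℝ | a < β * x + 0 * y} = univ := by ext y; simp [hax]
          rw [this, if_pos hax, measure_univ]
        · have : {y : ℝ | a < β * x + 0 * y} = ∅ := by ext y; simp [hax]
          rw [this, if_neg hax, measure_empty]
      have h1 : expM 1 {y : ℝ | a < β * x + 1 * y}
          = ENNReal.ofReal (Real.exp (-(max (a - β * x) 0))) := by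
        have : {y : ℝ | a < β * x + 1 * y} = Ioi (a - β * x) := by
          ext y; constructor <;> (intro hy; simp at hy ⊢; linarith)
        rw [this, expM_Ioi]
      rw [h0, h1]
      congr 2
      ring
    · rw [if_neg hx]
      have hset : Prod.mk x ⁻¹' ((fun p : ℝ × ℝ × ℝ => (β * p.1 + p.2.1 * p.2.2, p.1)) ⁻¹'
          (Ioi a ×ˢ Ioi b)) = ∅ := by
        ext q; simp [hx]
      rw [hset, measure_empty]
  rw [lintegral_congr hinner]
  -- convert to a Lebesgue integral against the density
  have hdm : Measurable (fun t : ℝ => ENNReal.ofReal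
      (if 0 < t then (1:ℝ)⁻¹ * Real.exp (-t / 1) else 0)) := by
    apply Measurable.ennreal_ofReal
    exact Measurable.ite measurableSet_Ioi (by fun_prop) measurable_const
  have hFm : Measurable (fun x : ℝ => if b < x then (ENNReal.ofReal β * (if a < β * x then 1 else 0)
      + ENNReal.ofReal (1 - β) * ENNReal.ofReal (Real.exp (-(max (a - β * x) 0)))) else 0) := by
    apply Measurable.ite measurableSet_Ioi
    · apply Measurable.add
      · apply Measurable.const_mul
        apply Measurable.ite _ measurable_const measurable_const
        exact measurableSet_lt measurable_const (measurable_id.const_mul β)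
      · apply Measurable.const_mul
        apply Measurable.ennreal_ofReal
        fun_prop
    · exact measurable_const
  rw [show expM 1 = MeasureTheory.volume.withDensity (fun t => ENNReal.ofReal
      (if 0 < t then (1:ℝ)⁻¹ * Real.exp (-t / 1) else 0)) from rfl,
    lintegral_withDensity_eq_lintegral_mul _ hdm hFm]
  -- pointwise identification with an indicator
  have hpt : ∀ x : ℝ, (ENNReal.ofReal (if 0 < x then (1:ℝ)⁻¹ * Real.exp (-x / 1) else 0)) *
        (if b < x then (ENNReal.ofReal β * (if a < β * x then 1 else 0)
          + ENNReal.ofReal (1 - β) * ENNReal.ofReal (Real.exp (-(max (a - β * x) 0)))) else 0)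
      = (Ioi m).indicator (fun x => ENNReal.ofReal (Real.exp (-x) *
          (β * (if a < β * x then 1 else 0)
            + (1 - β) * Real.exp (-(max (a - β * x) 0))))) x := by
    intro x
    simp only [Set.indicator_apply, mem_Ioi]
    by_cases hx : m < x
    · have hxb : b < x := lt_of_le_of_lt (le_max_left b 0) hx
      have hx0 : 0 < x := lt_of_le_of_lt (le_max_right b 0) hx
      rw [if_pos hx, if_pos hx0, if_pos hxb]
      rw [ENNReal.ofReal_mul (Real.exp_pos _).le, ENNReal.ofReal_add
        (by positivity) (by positivity), ENNReal.ofReal_mul hβ0.le,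
        ENNReal.ofReal_mul h1β.le]
      simp only [inv_one, one_mul, div_one]
      congr 2
      split_ifs <;> simp
    · rw [if_neg hx]
      rcases le_max_iff.mp (not_lt.mp hx) with h | h
      · rw [if_neg (not_lt.mpr h), mul_zero]
      · rw [if_neg (not_lt.mpr h)]
        simp
  simp only [Pi.mul_apply]
  rw [lintegral_congr hpt, lintegral_indicator measurableSet_Ioi]
  rcases le_or_gt a (β * m) with hA | hB
  · -- case a ≤ β m : integrand is exp(-x) on Ioi m
    have hcong : ∀ x ∈ Ioi m, ENNReal.ofReal (Real.exp (-x) *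
        (β * (if a < β * x then 1 else 0) + (1 - β) * Real.exp (-(max (a - β * x) 0))))
        = ENNReal.ofReal (Real.exp (-x)) := by
      intro x hx
      have hmx : m < x := hx
      have h1 : a < β * x := lt_of_le_of_lt hA (mul_lt_mul_of_pos_left hmx hβ0)
      rw [if_pos h1, max_eq_right (by linarith : a - β * x ≤ 0), neg_zero, Real.exp_zero]
      congr 1
      ring
    rw [setLIntegral_congr_fun measurableSet_Ioi hcong]
    have hI := my_lintegral_exp_Ioi one_pos m
    simp only [one_mul, div_one] at hI
    rw [hI, harith hβ0 hβ1 hA]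
  · -- case β m < a
    set c : ℝ := a / β with hc
    have ha0 : (0:ℝ) < a := lt_of_le_of_lt (mul_nonneg hβ0.le hm0) hB
    have hmc : m < c := (lt_div_iff₀ hβ0).mpr (by linarith [mul_comm β m, mul_comm m β])
    rw [← Ioc_union_Ioi_eq_Ioi hmc.le,
      lintegral_union measurableSet_Ioi (Ioc_disjoint_Ioi le_rfl)]
    have hc1 : ∀ x ∈ Ioc m c, ENNReal.ofReal (Real.exp (-x) *
        (β * (if a < β * x then 1 else 0) + (1 - β) * Real.exp (-(max (a - β * x) 0))))
        = ENNReal.ofReal ((1 - β) * Real.exp (-a)) *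
            ENNReal.ofReal (Real.exp (-((1 - β) * x))) := by
      intro x hx
      have hxa : β * x ≤ a := by
        have h' := (le_div_iff₀ hβ0).mp hx.2
        linarith [mul_comm x β]
      rw [if_neg (not_lt.mpr hxa), max_eq_left (by linarith : (0:ℝ) ≤ a - β * x),
        ← ENNReal.ofReal_mul (by positivity)]
      congr 1
      have hexp : Real.exp (-x) * Real.exp (-(a - β * x))
          = Real.exp (-a) * Real.exp (-((1 - β) * x)) := by
        rw [← Real.exp_add, ← Real.exp_add]; congr 1; ring
      linear_combination (1 - β) * hexp
    have hc2 : ∀ x ∈ Ioi c, ENNReal.ofReal (Real.exp (-x) *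
        (β * (if a < β * x then 1 else 0) + (1 - β) * Real.exp (-(max (a - β * x) 0))))
        = ENNReal.ofReal (Real.exp (-x)) := by
      intro x hx
      have hx' : c < x := hx
      have h1 : a < β * x := by
        have h'' := (div_lt_iff₀ hβ0).mp hx'
        linarith [mul_comm x β]
      rw [if_pos h1, max_eq_right (by linarith : a - β * x ≤ 0), neg_zero, Real.exp_zero]
      congr 1; ring
    rw [setLIntegral_congr_fun measurableSet_Ioc hc1,
      setLIntegral_congr_fun measurableSet_Ioi hc2,
      lintegral_const_mul' _ _ ENNReal.ofReal_ne_top,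
      my_lintegral_exp_Ioc h1β hmc.le]
    have hI := my_lintegral_exp_Ioi one_pos c
    simp only [one_mul, div_one] at hI
    rw [hI]
    have hmono : Real.exp (-((1 - β) * c)) ≤ Real.exp (-((1 - β) * m)) :=
      Real.exp_le_exp.mpr (by nlinarith)
    have hsimp : (1 - β) * Real.exp (-a) *
        ((Real.exp (-((1 - β) * m)) - Real.exp (-((1 - β) * c))) / (1 - β))
        = Real.exp (-a) * (Real.exp (-((1 - β) * m)) - Real.exp (-((1 - β) * c))) := by
      field_simp
    rw [← ENNReal.ofReal_mul (by positivity), hsimp,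
      ← ENNReal.ofReal_add (by nlinarith [Real.exp_pos (-a)]) (Real.exp_pos (-c)).le,
      harith2 hβ0 hβ1 hB, ← hm]
    congr 1
    have hE1 : Real.exp (-a) * Real.exp (-((1 - β) * m)) = Real.exp (-(a + (1 - β) * m)) := by
      rw [← Real.exp_add]; congr 1; ring
    have hE2 : Real.exp (-a) * Real.exp (-((1 - β) * c)) = Real.exp (-c) := by
      rw [← Real.exp_add]; congr 1
      rw [hc]; field_simp; ring
    linear_combination hE1 - hE2

lemma right_core {β : ℝ} (hβ0 : 0 < β) (hβ1 : β < 1) (a b : ℝ) :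
    ((expM 1).prod (expM 1))
      ((fun p : ℝ × ℝ => (p.1, min (p.1 / β) (p.2 / (1 - β)))) ⁻¹' (Ioi a ×ˢ Ioi b))
    = ENNReal.ofReal (Real.exp (-(max (max a (β * b)) 0 + max ((1 - β) * b) 0))) := by
  have h1β : (0:ℝ) < 1 - β := by linarith
  have hset : (fun p : ℝ × ℝ => (p.1, min (p.1 / β) (p.2 / (1 - β)))) ⁻¹' (Ioi a ×ˢ Ioi b)
      = Ioi (max a (β * b)) ×ˢ Ioi ((1 - β) * b) := by
    ext p
    simp only [mem_preimage, mem_prod, mem_Ioi, lt_min_iff, max_lt_iff]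
    rw [lt_div_iff₀ hβ0, lt_div_iff₀ h1β, mul_comm b β, mul_comm b (1 - β)]
    tauto
  rw [hset, Measure.prod_prod, expM_Ioi, expM_Ioi,
    ← ENNReal.ofReal_mul (Real.exp_pos _).le, ← Real.exp_add]
  congr 1
  ring

end helpers

/-- Time-reversal of the AR(1) kernel preserving `Exp(1)`: let `u, w` be independent `Exp(1)`
random variables, `ζ ~ Bernoulli(1-β)` independent of both, and `v = βu + ζw`.  Then the
conditional law of `u` given `v` is the law of `min{v/β, η/(1-β)}` where `η ~ Exp(1)` is
independent of `v`.  We express this by saying that the joint law of `(v, u)` coincides with the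
joint law of `(V, min{V/β, η/(1-β)})` for any independent `V, η ~ Exp(1)`. -/
theorem exp_ar_time_reversal {Ω : Type*} [MeasurableSpace Ω] (P : Measure Ω)
    [IsProbabilityMeasure P]
    {Ω' : Type*} [MeasurableSpace Ω'] (P' : Measure Ω') [IsProbabilityMeasure P']
    (β : ℝ) (hβ : β ∈ Set.Ioo (0:ℝ) 1)
    (u ζ w : Ω → ℝ) (hu : Measurable u) (hζ : Measurable ζ) (hw : Measurable w)
    (hind : iIndepFun ![u, ζ, w] P)
    (hulaw : Measure.map u P = expM 1)
    (hζlaw : Measure.map ζ P = bernM (1 - β))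
    (hwlaw : Measure.map w P = expM 1)
    (V η : Ω' → ℝ) (hV : Measurable V) (hη : Measurable η)
    (hind' : IndepFun V η P')
    (hVlaw : Measure.map V P' = expM 1) (hηlaw : Measure.map η P' = expM 1) :
    Measure.map (fun ω => (β * u ω + ζ ω * w ω, u ω)) P
      = Measure.map (fun ω' => (V ω', min (V ω' / β) (η ω' / (1 - β)))) P' := by
  obtain ⟨hβ0, hβ1⟩ := hβ
  have hf : ∀ i, Measurable (![u, ζ, w] i) := by
    intro i
    fin_cases i <;> simpa using ‹_›
  -- joint law of (ζ, w)
  have hζw : Measure.map (fun ω => (ζ ω, w ω)) P = (bernM (1 - β)).prod (expM 1) := by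
    have h12 : IndepFun ζ w P := hind.indepFun (show (1 : Fin 3) ≠ 2 by decide)
    exact ((indepFun_iff_map_prod_eq_prod_map_map hζ.aemeasurable hw.aemeasurable).mp
      h12).trans (by rw [hζlaw, hwlaw])
  -- joint law of (u, (ζ, w))
  have hjoint : Measure.map (fun ω => (u ω, (ζ ω, w ω))) P
      = (expM 1).prod ((bernM (1 - β)).prod (expM 1)) := by
    have hiu : IndepFun u (fun ω => (ζ ω, w ω)) P :=
      (hind.indepFun_prodMk hf 1 2 0 (by decide) (by decide)).symm
    exact ((indepFun_iff_map_prod_eq_prod_map_map hu.aemeasurable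
      (hζ.prodMk hw).aemeasurable).mp hiu).trans (by rw [hulaw, hζw])
  -- joint law of (V, η)
  have hVη : Measure.map (fun ω' => (V ω', η ω')) P' = (expM 1).prod (expM 1) := by
    exact ((indepFun_iff_map_prod_eq_prod_map_map hV.aemeasurable hη.aemeasurable).mp
      hind').trans (by rw [hVlaw, hηlaw])
  -- rewrite both maps as maps of product measures
  have hg : Measurable (fun p : ℝ × ℝ × ℝ => (β * p.1 + p.2.1 * p.2.2, p.1)) :=
    ((measurable_const.mul measurable_fst).add
      ((measurable_fst.comp measurable_snd).mul (measurable_snd.comp measurable_snd))).prodMk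
      measurable_fst
  have hg' : Measurable (fun p : ℝ × ℝ => (p.1, min (p.1 / β) (p.2 / (1 - β)))) :=
    measurable_fst.prodMk ((measurable_fst.div_const β).min (measurable_snd.div_const (1 - β)))
  have hL : Measure.map (fun ω => (β * u ω + ζ ω * w ω, u ω)) P
      = Measure.map (fun p : ℝ × ℝ × ℝ => (β * p.1 + p.2.1 * p.2.2, p.1))
          ((expM 1).prod ((bernM (1 - β)).prod (expM 1))) := by
    rw [← hjoint, Measure.map_map hg (hu.prodMk (hζ.prodMk hw))]
    rfl
  have hR : Measure.map (fun ω' => (V ω', min (V ω' / β) (η ω' / (1 - β)))) P'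
      = Measure.map (fun p : ℝ × ℝ => (p.1, min (p.1 / β) (p.2 / (1 - β))))
          ((expM 1).prod (expM 1)) := by
    rw [← hVη, Measure.map_map hg' (hV.prodMk hη)]
    rfl
  rw [hL, hR]
  -- extensionality on rectangles
  have hspan : IsCountablySpanning (range (Ioi : ℝ → Set ℝ)) := by
    refine ⟨fun n => Ioi (-(n : ℝ)), fun n => mem_range_self _, ?_⟩
    ext x
    simp only [mem_iUnion, mem_Ioi, mem_univ, iff_true]
    obtain ⟨n, hn⟩ := exists_nat_gt (-x)
    exact ⟨n, by linarith⟩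
  have hreal : (inferInstance : MeasurableSpace ℝ)
      = MeasurableSpace.generateFrom (range (Ioi : ℝ → Set ℝ)) := by
    exact borel_eq_generateFrom_Ioi ℝ
  have hgen : (inferInstance : MeasurableSpace (ℝ × ℝ))
      = MeasurableSpace.generateFrom
          (image2 (· ×ˢ ·) (range (Ioi : ℝ → Set ℝ)) (range (Ioi : ℝ → Set ℝ))) := by
    rw [← generateFrom_prod_eq hspan hspan]
    show Prod.instMeasurableSpace = _
    rw [← hreal]
  haveI : IsProbabilityMeasure (bernM (1 - β)) := by
    constructor
    simp only [bernM, Measure.coe_add, Measure.coe_smul, Pi.add_apply, Pi.smul_apply,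
      measure_univ, smul_eq_mul, mul_one]
    rw [← ENNReal.ofReal_add (by linarith) (by linarith)]
    norm_num
  haveI : IsProbabilityMeasure (Measure.map (fun p : ℝ × ℝ × ℝ =>
      (β * p.1 + p.2.1 * p.2.2, p.1)) ((expM 1).prod ((bernM (1 - β)).prod (expM 1)))) :=
    Measure.isProbabilityMeasure_map hg.aemeasurable
  haveI : IsProbabilityMeasure (Measure.map (fun p : ℝ × ℝ =>
      (p.1, min (p.1 / β) (p.2 / (1 - β)))) ((expM 1).prod (expM 1))) :=
    Measure.isProbabilityMeasure_map hg'.aemeasurable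
  apply MeasureTheory.ext_of_generate_finite _ hgen (isPiSystem_Ioi.prod isPiSystem_Ioi)
  · rintro _ ⟨A, ⟨a, rfl⟩, B, ⟨b, rfl⟩, rfl⟩
    rw [Measure.map_apply hg (measurableSet_Ioi.prod measurableSet_Ioi),
      Measure.map_apply hg' (measurableSet_Ioi.prod measurableSet_Ioi),
      left_core hβ0 hβ1 a b, right_core hβ0 hβ1 a b]
  · simp [measure_univ]
end

section
/- Fix p > 0, σ > 0 and β ∈ (0,1). The function s ↦ (β² + (1-β²)/(1+(sσ)²))^p is the characteristic function of a probability measure on ℝ, namely the law of ξ_β - ξ'_β where ξ_β, ξ'_β are independent copies of the Gamma innovation, and if η_β has this law and η' ~ BK(p,σ) is independent, then βη' + η_β ~ BK(p, σ). -/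
open MeasureTheory ProbabilityTheory

set_option maxHeartbeats 1000000

open MeasureTheory ProbabilityTheory

lemma integral_mul_of_indep_bounded {Ω : Type*} [MeasurableSpace Ω] (P : Measure Ω)
    [IsProbabilityMeasure P] {U V : Ω → ℂ} (h : IndepFun U V P)
    (hU : Measurable U) (hV : Measurable V)
    (hUb : ∀ ω, ‖U ω‖ ≤ 1) (hVb : ∀ ω, ‖V ω‖ ≤ 1) :
    ∫ ω, U ω * V ω ∂P = (∫ ω, U ω ∂P) * ∫ ω, V ω ∂P := by
  have hint : ∀ (f : Ω → ℝ), Measurable f → (∀ ω, |f ω| ≤ 1) → Integrable f P := fun f hf hbd =>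
    (integrable_const (1:ℝ)).mono' hf.aestronglyMeasurable (Filter.Eventually.of_forall hbd)
  have hma : Measurable fun ω => (U ω).re := Complex.measurable_re.comp hU
  have hmb : Measurable fun ω => (U ω).im := Complex.measurable_im.comp hU
  have hmc : Measurable fun ω => (V ω).re := Complex.measurable_re.comp hV
  have hmd : Measurable fun ω => (V ω).im := Complex.measurable_im.comp hV
  have habd : ∀ ω, |(U ω).re| ≤ 1 := fun ω => (Complex.abs_re_le_norm _).trans (hUb ω)
  have hbbd : ∀ ω, |(U ω).im| ≤ 1 := fun ω => (Complex.abs_im_le_norm _).trans (hUb ω)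
  have hcbd : ∀ ω, |(V ω).re| ≤ 1 := fun ω => (Complex.abs_re_le_norm _).trans (hVb ω)
  have hdbd : ∀ ω, |(V ω).im| ≤ 1 := fun ω => (Complex.abs_im_le_norm _).trans (hVb ω)
  have hprod : ∀ (f g : Ω → ℝ), Measurable f → Measurable g → (∀ ω, |f ω| ≤ 1) →
      (∀ ω, |g ω| ≤ 1) → Integrable (fun ω => f ω * g ω) P := by
    intro f g hf hg hfb hgb
    refine hint _ (hf.mul hg) fun ω => ?_
    rw [abs_mul]
    calc |f ω| * |g ω| ≤ 1 * 1 := mul_le_mul (hfb ω) (hgb ω) (abs_nonneg _) zero_le_one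
      _ = 1 := one_mul 1
  have hUint : Integrable U P :=
    (integrable_const (1:ℝ)).mono' hU.aestronglyMeasurable (Filter.Eventually.of_forall hUb)
  have hVint : Integrable V P :=
    (integrable_const (1:ℝ)).mono' hV.aestronglyMeasurable (Filter.Eventually.of_forall hVb)
  have hUVint : Integrable (fun ω => U ω * V ω) P := by
    refine (integrable_const (1:ℝ)).mono' (hU.mul hV).aestronglyMeasurable
      (Filter.Eventually.of_forall fun ω => ?_)
    rw [norm_mul]
    calc ‖U ω‖ * ‖V ω‖ ≤ 1 * 1 := mul_le_mul (hUb ω) (hVb ω) (norm_nonneg _) zero_le_one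
      _ = 1 := one_mul 1
  have hac : ∫ ω, (U ω).re * (V ω).re ∂P = (∫ ω, (U ω).re ∂P) * ∫ ω, (V ω).re ∂P :=
    (h.comp Complex.measurable_re Complex.measurable_re).integral_fun_mul_eq_mul_integral
      (hint _ hma habd).1 (hint _ hmc hcbd).1
  have had : ∫ ω, (U ω).re * (V ω).im ∂P = (∫ ω, (U ω).re ∂P) * ∫ ω, (V ω).im ∂P :=
    (h.comp Complex.measurable_re Complex.measurable_im).integral_fun_mul_eq_mul_integral
      (hint _ hma habd).1 (hint _ hmd hdbd).1
  have hbc : ∫ ω, (U ω).im * (V ω).re ∂P = (∫ ω, (U ω).im ∂P) * ∫ ω, (V ω).re ∂P :=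
    (h.comp Complex.measurable_im Complex.measurable_re).integral_fun_mul_eq_mul_integral
      (hint _ hmb hbbd).1 (hint _ hmc hcbd).1
  have hbd : ∫ ω, (U ω).im * (V ω).im ∂P = (∫ ω, (U ω).im ∂P) * ∫ ω, (V ω).im ∂P :=
    (h.comp Complex.measurable_im Complex.measurable_im).integral_fun_mul_eq_mul_integral
      (hint _ hmb hbbd).1 (hint _ hmd hdbd).1
  have eUr := integral_re hUint; have eUi := integral_im hUint
  have eVr := integral_re hVint; have eVi := integral_im hVint
  have eUVr := integral_re hUVint; have eUVi := integral_im hUVint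
  simp only [RCLike.re_to_complex, RCLike.im_to_complex] at eUr eUi eVr eVi eUVr eUVi
  apply Complex.ext
  · rw [← eUVr, Complex.mul_re, ← eUr, ← eVr, ← eUi, ← eVi]
    simp only [Complex.mul_re]
    rw [integral_sub (hprod _ _ hma hmc habd hcbd) (hprod _ _ hmb hmd hbbd hdbd), hac, hbd]
  · rw [← eUVi, Complex.mul_im, ← eUr, ← eVr, ← eUi, ← eVi]
    simp only [Complex.mul_im]
    rw [integral_add (hprod _ _ hma hmd habd hdbd) (hprod _ _ hmb hmc hbbd hcbd), had, hbc]

lemma norm_exp_I_mul (t x : ℝ) : ‖Complex.exp (Complex.I * t * x)‖ = 1 := by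
  have h : Complex.I * t * x = (t * x : ℝ) * Complex.I := by push_cast; ring
  rw [h, Complex.norm_exp_ofReal_mul_I]

lemma measurable_exp_I_mul (t : ℝ) : Measurable fun x : ℝ => Complex.exp (Complex.I * t * x) :=
  Complex.measurable_exp.comp (Complex.measurable_ofReal.const_mul (Complex.I * t))


/-- Self-decomposability of the Bessel-K distribution and identification of its innovation
`BK_β(p,σ)`.  Let `ξ_β, ξ'_β` be independent copies of the gamma innovation, i.e. random
variables with characteristic function `((1-iβsσ)/(1-isσ))^p`, and let `η' ~ BK(p,σ)`
(characteristic function `(1+(sσ)²)^(-p)`) be independent of both.  Then: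
* `η_β = ξ_β - ξ'_β` has law a probability measure with characteristic function
  `s ↦ (β² + (1-β²)/(1+(sσ)²))^p`;
* `βη' + η_β ~ BK(p, σ)`. -/
theorem besselK_selfDecomposable {Ω : Type*} [MeasurableSpace Ω] (P : Measure Ω)
    [IsProbabilityMeasure P]
    (p σ β : ℝ) (hp : 0 < p) (hσ : 0 < σ) (hβ : β ∈ Set.Ioo (0:ℝ) 1)
    (ξβ ξβ' η' : Ω → ℝ) (hξβ : Measurable ξβ) (hξβ' : Measurable ξβ') (hη' : Measurable η')
    (hind : iIndepFun ![ξβ, ξβ', η'] P)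
    (hξβchar : ∀ s : ℝ, ∫ ω, Complex.exp (Complex.I * s * ξβ ω) ∂P
      = ((1 - Complex.I * β * s * σ) / (1 - Complex.I * s * σ)) ^ (p : ℂ))
    (hξβ'char : ∀ s : ℝ, ∫ ω, Complex.exp (Complex.I * s * ξβ' ω) ∂P
      = ((1 - Complex.I * β * s * σ) / (1 - Complex.I * s * σ)) ^ (p : ℂ))
    (hη'char : ∀ s : ℝ, ∫ ω, Complex.exp (Complex.I * s * η' ω) ∂P
      = ((1 + (s * σ) ^ 2 : ℝ) ^ (-p) : ℝ)) :
    IsProbabilityMeasure (Measure.map (fun ω => ξβ ω - ξβ' ω) P) ∧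
    (∀ s : ℝ, ∫ ω, Complex.exp (Complex.I * s * (ξβ ω - ξβ' ω)) ∂P
      = (((β ^ 2 + (1 - β ^ 2) / (1 + (s * σ) ^ 2)) ^ p : ℝ) : ℂ)) ∧
    (∀ s : ℝ, ∫ ω, Complex.exp (Complex.I * s * (β * η' ω + (ξβ ω - ξβ' ω))) ∂P
      = ((1 + (s * σ) ^ 2 : ℝ) ^ (-p) : ℝ)) := by
  obtain ⟨hβ0, hβ1⟩ := hβ
  have hmeas : ∀ i, Measurable (![ξβ, ξβ', η'] i) := by
    intro i; fin_cases i <;> simpa using (by assumption : _)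
  -- part 2
  have part2 : ∀ s : ℝ, ∫ ω, Complex.exp (Complex.I * s * (ξβ ω - ξβ' ω)) ∂P
      = (((β ^ 2 + (1 - β ^ 2) / (1 + (s * σ) ^ 2)) ^ p : ℝ) : ℂ) := by
    intro s
    have hB : (0:ℝ) < 1 + (s * σ) ^ 2 := by positivity
    -- independence of ξβ and ξβ'
    have hI01 : IndepFun ξβ ξβ' P := by
      have := hind.indepFun (show (0 : Fin 3) ≠ 1 by decide)
      simpa using this
    have hIndUV : IndepFun (fun ω => Complex.exp (Complex.I * s * ξβ ω))
        (fun ω => Complex.exp (Complex.I * (-s : ℝ) * ξβ' ω)) P :=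
      hI01.comp (measurable_exp_I_mul s) (measurable_exp_I_mul (-s))
    have hsplit : ∫ ω, Complex.exp (Complex.I * s * (ξβ ω - ξβ' ω)) ∂P
        = (∫ ω, Complex.exp (Complex.I * s * ξβ ω) ∂P)
          * ∫ ω, Complex.exp (Complex.I * (-s : ℝ) * ξβ' ω) ∂P := by
      rw [show (fun ω => Complex.exp (Complex.I * s * (ξβ ω - ξβ' ω)))
          = fun ω => Complex.exp (Complex.I * s * ξβ ω)
              * Complex.exp (Complex.I * (-s : ℝ) * ξβ' ω) by
        funext ω
        rw [← Complex.exp_add]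
        congr 1
        push_cast
        ring]
      exact integral_mul_of_indep_bounded P hIndUV
        ((measurable_exp_I_mul s).comp hξβ) ((measurable_exp_I_mul (-s)).comp hξβ')
        (fun ω => (norm_exp_I_mul s (ξβ ω)).le) (fun ω => (norm_exp_I_mul (-s) (ξβ' ω)).le)
    rw [hsplit, hξβchar s, hξβ'char (-s)]
    -- now pure complex-power computation
    set n : ℂ := 1 - Complex.I * β * s * σ with hn_def
    set dd : ℂ := 1 - Complex.I * s * σ with hd_def
    set z : ℂ := n / dd with hz_def
    have hnre : n.re = 1 := by simp [hn_def]
    have hnim : n.im = -(β * s * σ) := by simp [hn_def]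
    have hdre : dd.re = 1 := by simp [hd_def]
    have hdim : dd.im = -(s * σ) := by simp [hd_def]
    have hd0 : dd ≠ 0 := fun h => by simp [h] at hdre
    have hn0 : n ≠ 0 := fun h => by simp [h] at hnre
    have hz0 : z ≠ 0 := div_ne_zero hn0 hd0
    have hnsq_d : Complex.normSq dd = 1 + (s * σ) ^ 2 := by
      rw [Complex.normSq_apply, hdre, hdim]; ring
    have hnsq_n : Complex.normSq n = 1 + (β * s * σ) ^ 2 := by
      rw [Complex.normSq_apply, hnre, hnim]; ring
    have hzre : z.re = (1 + β * (s * σ) ^ 2) / (1 + (s * σ) ^ 2) := by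
      rw [hz_def, Complex.div_re, hnre, hnim, hdre, hdim, hnsq_d]; ring
    have hzrepos : 0 < z.re := by
      rw [hzre]; positivity
    have harg : z.arg ≠ Real.pi := fun h => by
      have := (Complex.arg_eq_pi_iff.mp h).1; linarith
    -- the second factor equals conj z
    have hconj : (1 - Complex.I * β * (-s : ℝ) * σ) / (1 - Complex.I * (-s : ℝ) * σ)
        = (starRingEnd ℂ) z := by
      rw [hz_def, map_div₀, hn_def, hd_def]
      congr 1 <;> first
        | (simp [Complex.conj_I]; push_cast; ring)
        | (simp [Complex.conj_I])
    rw [hconj, Complex.conj_cpow z _ harg, Complex.conj_ofReal, Complex.mul_conj,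
      Complex.normSq_eq_norm_sq, Complex.norm_cpow_real]
    have habs : (‖z‖ : ℝ) ^ (2:ℕ) = (1 + (β * s * σ) ^ 2) / (1 + (s * σ) ^ 2) := by
      rw [Complex.sq_norm, hz_def, Complex.normSq_div, hnsq_n, hnsq_d]
    have hpow : (‖z‖ ^ p) ^ (2:ℕ) = (β ^ 2 + (1 - β ^ 2) / (1 + (s * σ) ^ 2)) ^ p := by
      have h1 : (‖z‖ ^ p) ^ (2:ℕ) = ((‖z‖ : ℝ) ^ (2:ℕ)) ^ p := by
        rw [← Real.rpow_natCast (‖z‖ ^ p) 2, ← Real.rpow_natCast (‖z‖) 2,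
          ← Real.rpow_mul (norm_nonneg z), ← Real.rpow_mul (norm_nonneg z)]
        ring_nf
      rw [h1, habs]
      congr 1
      field_simp
      ring
    rw [← hpow]
  refine ⟨?_, part2, ?_⟩
  · exact Measure.isProbabilityMeasure_map ((hξβ.sub hξβ').aemeasurable)
  · intro s
    have hB : (0:ℝ) < 1 + (s * σ) ^ 2 := by positivity
    have hA : (0:ℝ) < 1 + (β * s * σ) ^ 2 := by positivity
    have hpair : IndepFun η' (fun ω => (ξβ ω, ξβ' ω)) P :=
      (hind.indepFun_prodMk hmeas 0 1 2 (by decide) (by decide)).symm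
    have hg : Measurable fun q : ℝ × ℝ =>
        Complex.exp (Complex.I * s * ((q.1 : ℂ) - (q.2 : ℂ))) := by
      fun_prop
    have hIndUV : IndepFun (fun ω => Complex.exp (Complex.I * (s * β : ℝ) * η' ω))
        (fun ω => Complex.exp (Complex.I * s * (ξβ ω - ξβ' ω))) P := by
      exact hpair.comp (measurable_exp_I_mul (s * β)) hg
    have hUm : Measurable (fun ω => Complex.exp (Complex.I * (s * β : ℝ) * η' ω)) :=
      (measurable_exp_I_mul (s * β)).comp hη'
    have hVm : Measurable (fun ω => Complex.exp (Complex.I * s * (ξβ ω - ξβ' ω))) := by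
      fun_prop
    have hUb : ∀ ω, ‖Complex.exp (Complex.I * (s * β : ℝ) * η' ω)‖ ≤ 1 :=
      fun ω => (norm_exp_I_mul (s * β) (η' ω)).le
    have hVb : ∀ ω, ‖Complex.exp (Complex.I * s * (ξβ ω - ξβ' ω))‖ ≤ 1 := by
      intro ω
      rw [show ((ξβ ω : ℂ) - (ξβ' ω : ℂ)) = ((ξβ ω - ξβ' ω : ℝ) : ℂ) by push_cast; ring]
      exact (norm_exp_I_mul s (ξβ ω - ξβ' ω)).le
    have key := integral_mul_of_indep_bounded P hIndUV hUm hVm hUb hVb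
    have hfun : (fun ω => Complex.exp (Complex.I * s * (β * η' ω + (ξβ ω - ξβ' ω))))
        = fun ω => Complex.exp (Complex.I * (s * β : ℝ) * η' ω)
            * Complex.exp (Complex.I * s * (ξβ ω - ξβ' ω)) := by
      funext ω
      rw [← Complex.exp_add]
      congr 1
      push_cast
      ring
    have hsplit : ∫ ω, Complex.exp (Complex.I * s * (β * η' ω + (ξβ ω - ξβ' ω))) ∂P
        = (∫ ω, Complex.exp (Complex.I * (s * β : ℝ) * η' ω) ∂P)
          * ∫ ω, Complex.exp (Complex.I * s * (ξβ ω - ξβ' ω)) ∂P := by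
      rw [hfun]; exact key
    rw [hsplit, hη'char (s * β), part2 s]
    rw [← Complex.ofReal_mul]
    congr 1
    have h1 : β ^ 2 + (1 - β ^ 2) / (1 + (s * σ) ^ 2)
        = (1 + (β * s * σ) ^ 2) / (1 + (s * σ) ^ 2) := by
      field_simp; ring
    have h2 : (1 + (s * β * σ) ^ 2 : ℝ) = 1 + (β * s * σ) ^ 2 := by ring
    rw [h2, h1, Real.div_rpow hA.le hB.le, Real.rpow_neg hA.le, Real.rpow_neg hB.le]
    field_simp
end

section
/- Let X be a separable Hilbert space with orthonormal basis {r_k}, let μ be the law of u = Σ_k γ_k ξ_k r_k with {ξ_k} independent real random variables with laws μ_k, {γ_k} ∈ ℝ decaying fast enough that ‖u‖_X < ∞ a.s. Suppose for each k, Q_k is a μ_k-reversible probability kernel on ℝ. Define the kernel Q on X by drawing ζ_k ~ Q_k(ξ_k, ·) independently and setting v = Σ_k γ_k ζ_k r_k. Then Q satisfies detailed balance with respect to μ, i.e., Q(u,dv)μ(du) = Q(v,du)μ(dv) as measures on X × X. -/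
open MeasureTheory ProbabilityTheory


section aux
variable {α E : Type*} [MeasurableSpace α] [NormedAddCommGroup E]
  [CompleteSpace E] [SecondCountableTopology E] [MeasurableSpace E] [BorelSpace E]

lemma measurableSet_summable (g : ℕ → α → E) (hg : ∀ k, Measurable (g k)) :
    MeasurableSet {x | Summable fun k => g k x} := by
  have : {x | Summable fun k => g k x} =
      ⋂ (n : ℕ), ⋃ (s : Finset ℕ), ⋂ (t : Finset ℕ), ⋂ (_ : Disjoint t s),
        {x | ‖∑ i ∈ t, g i x‖ < 1 / (n + 1 : ℝ)} := by
    ext x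
    simp only [Set.mem_setOf_eq, Set.mem_iInter, Set.mem_iUnion]
    constructor
    · intro hs n
      exact summable_iff_vanishing_norm.1 hs _ (by positivity)
    · intro h
      rw [summable_iff_vanishing_norm]
      intro ε hε
      obtain ⟨n, hn⟩ := exists_nat_one_div_lt hε
      obtain ⟨s, hs⟩ := h n
      exact ⟨s, fun t ht => (hs t ht).trans hn⟩
  rw [this]
  refine MeasurableSet.iInter fun n => MeasurableSet.iUnion fun s =>
    MeasurableSet.iInter fun t => MeasurableSet.iInter fun _ => ?_
  exact measurableSet_lt ((t.measurable_sum fun i _ => hg i).norm) measurable_const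

lemma measurable_tsum' (g : ℕ → α → E) (hg : ∀ k, Measurable (g k)) :
    Measurable fun x => ∑' k, g k x := by
  have hS := measurableSet_summable g hg
  set S := {x | Summable fun k => g k x} with hSdef
  classical
  have htend : ∀ x, Filter.Tendsto
      (fun n => if x ∈ S then ∑ k ∈ Finset.range n, g k x else 0)
      Filter.atTop (nhds (∑' k, g k x)) := by
    intro x
    by_cases hx : x ∈ S
    · simp only [hx, if_true]
      exact hx.hasSum.tendsto_sum_nat
    · simp only [hx, if_false]
      rw [tsum_eq_zero_of_not_summable hx]
      exact tendsto_const_nhds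
  exact measurable_of_tendsto_metrizable'  Filter.atTop
    (fun n => Measurable.ite hS (Finset.measurable_sum _ fun i _ => hg i) measurable_const)
    (tendsto_pi_nhds.2 htend)

end aux

lemma map_restrict_pi {Ω : Type*} [MeasurableSpace Ω] (P : Measure Ω) [IsProbabilityMeasure P]
    {β : Type*} [MeasurableSpace β] (f : ℕ → Ω → β) (hf : ∀ k, Measurable (f k))
    (hindep : iIndepFun f P) (I : Finset ℕ) :
    Measure.map (fun ω (i : I) => f i ω) P
      = Measure.pi (fun i : I => Measure.map (f i) P) := by
  haveI : ∀ i : I, IsProbabilityMeasure (Measure.map (f i) P) :=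
    fun i => Measure.isProbabilityMeasure_map (hf i).aemeasurable
  refine (Measure.pi_eq fun s hs => ?_).symm
  rw [Measure.map_apply (measurable_pi_lambda _ fun i : I => hf i) (MeasurableSet.univ_pi hs)]
  classical
  set sets : ℕ → Set β := fun i => if h : i ∈ I then s ⟨i, h⟩ else Set.univ with hsets
  have hpre : (fun ω (i : I) => f i ω) ⁻¹' Set.univ.pi s = ⋂ i ∈ I, f i ⁻¹' sets i := by
    ext ω
    simp only [Set.mem_preimage, Set.mem_univ_pi, Set.mem_iInter, hsets]
    constructor
    · intro h i hi; simp only [hi, dif_pos]; exact h ⟨i, hi⟩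
    · intro h i; have := h i i.2; simpa only [i.2, dif_pos] using this
  rw [hpre, hindep.measure_inter_preimage_eq_mul I
    (fun i hi => by simp only [hsets, hi, dif_pos]; exact hs ⟨i, hi⟩)]
  rw [← Finset.prod_attach I fun i => P (f i ⁻¹' sets i)]
  refine Finset.prod_congr rfl fun i _ => ?_
  rw [Measure.map_apply (hf i) (hs i)]
  congr 1
  simp only [hsets, i.2, dif_pos]


/-- Detailed balance of the product proposal kernel with respect to a product prior on a
separable Hilbert space `X` with orthonormal basis `{r_k}`.  Let `μ` be the law of
`u = Σ_k γ_k ξ_k r_k` where the `ξ_k` are independent with laws `μ_k` and the series converges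
a.s.  Suppose each `Q_k` is a `μ_k`-reversible Markov kernel on `ℝ`, and `v = Σ_k γ_k ζ_k r_k`
where, independently across `k`, `ζ_k ~ Q_k(ξ_k, ·)` (i.e. `(ξ_k, ζ_k)` has law
`μ_k ⊗ₘ Q_k`).  Then the kernel `Q(u, dv)` thus defined satisfies detailed balance with
respect to `μ`:  the measure `Q(u,dv)μ(du)`, which is the joint law of `(u,v)`, is symmetric
under the swap `(u,v) ↦ (v,u)`. -/
theorem product_kernel_detailed_balance {Ω : Type*} [MeasurableSpace Ω] (P : Measure Ω)
    [IsProbabilityMeasure P]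
    {X : Type*} [NormedAddCommGroup X] [InnerProductSpace ℝ X] [CompleteSpace X]
    [SecondCountableTopology X] [MeasurableSpace X] [BorelSpace X]
    (r : ℕ → X) (hr : Orthonormal ℝ r) (γ : ℕ → ℝ)
    (μk : ℕ → Measure ℝ) (hμk : ∀ k, IsProbabilityMeasure (μk k))
    (Qk : ℕ → Kernel ℝ ℝ) (hQk : ∀ k, IsMarkovKernel (Qk k))
    (hrev : ∀ k, ((μk k).compProd (Qk k)).map Prod.swap = (μk k).compProd (Qk k))
    (ξ ζ : ℕ → Ω → ℝ) (hξ : ∀ k, Measurable (ξ k)) (hζ : ∀ k, Measurable (ζ k))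
    (hpairs : iIndepFun (fun k ω => (ξ k ω, ζ k ω)) P)
    (hjoint : ∀ k, Measure.map (fun ω => (ξ k ω, ζ k ω)) P = (μk k).compProd (Qk k))
    (hconv : ∀ᵐ ω ∂P, Summable (fun k => (γ k * ξ k ω) • r k) ∧
      Summable (fun k => (γ k * ζ k ω) • r k)) :
    Measure.map
        (fun ω => ((∑' k, (γ k * ξ k ω) • r k, ∑' k, (γ k * ζ k ω) • r k) : X × X)) P
      = Measure.map
          (fun ω => ((∑' k, (γ k * ζ k ω) • r k, ∑' k, (γ k * ξ k ω) • r k) : X × X)) P := by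
  set pair : ℕ → Ω → ℝ × ℝ := fun k ω => (ξ k ω, ζ k ω) with hpairdef
  set pair' : ℕ → Ω → ℝ × ℝ := fun k ω => (ζ k ω, ξ k ω) with hpairdef'
  have hpm : ∀ k, Measurable (pair k) := fun k => (hξ k).prodMk (hζ k)
  have hpm' : ∀ k, Measurable (pair' k) := fun k => (hζ k).prodMk (hξ k)
  have hindep' : iIndepFun pair' P :=
    hpairs.comp (fun _ => Prod.swap) (fun _ => measurable_swap)
  have hlaw : ∀ k, Measure.map (pair' k) P = Measure.map (pair k) P := by
    intro k
    have h1 : pair' k = Prod.swap ∘ pair k := rfl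
    rw [h1, ← Measure.map_map measurable_swap (hpm k)]
    show Measure.map Prod.swap (Measure.map (fun ω => (ξ k ω, ζ k ω)) P) = _
    rw [hjoint k, hrev k]
  set Φ : Ω → (ℕ → ℝ × ℝ) := fun ω k => pair k ω with hΦdef
  set Ψ : Ω → (ℕ → ℝ × ℝ) := fun ω k => pair' k ω with hΨdef
  have hΦ : Measurable Φ := measurable_pi_lambda _ hpm
  have hΨ : Measurable Ψ := measurable_pi_lambda _ hpm'
  haveI : IsProbabilityMeasure (Measure.map Φ P) := Measure.isProbabilityMeasure_map hΦ.aemeasurable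
  haveI : IsProbabilityMeasure (Measure.map Ψ P) := Measure.isProbabilityMeasure_map hΨ.aemeasurable
  have key : Measure.map Φ P = Measure.map Ψ P := by
    refine ext_of_generate_finite (measurableCylinders (fun _ : ℕ => ℝ × ℝ))
      generateFrom_measurableCylinders.symm isPiSystem_measurableCylinders (fun t ht => ?_) (by simp)
    obtain ⟨I, S, hS, rfl⟩ := (mem_measurableCylinders t).mp ht
    have hcyl : MeasurableSet (cylinder (α := fun _ : ℕ => ℝ × ℝ) I S) := MeasurableSet.cylinder I hS
    rw [Measure.map_apply hΦ hcyl, Measure.map_apply hΨ hcyl]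
    have h1 : Φ ⁻¹' cylinder I S = (fun ω (i : I) => pair i ω) ⁻¹' S := rfl
    have h2 : Ψ ⁻¹' cylinder I S = (fun ω (i : I) => pair' i ω) ⁻¹' S := rfl
    rw [h1, h2, ← Measure.map_apply (measurable_pi_lambda _ fun i : I => hpm i) hS,
      ← Measure.map_apply (measurable_pi_lambda _ fun i : I => hpm' i) hS,
      map_restrict_pi P pair hpm hpairs I, map_restrict_pi P pair' hpm' hindep' I]
    rw [congrArg Measure.pi (funext fun i : I => hlaw i)]
  set G : (ℕ → ℝ × ℝ) → X × X :=
    fun x => (∑' k, (γ k * (x k).1) • r k, ∑' k, (γ k * (x k).2) • r k) with hGdef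
  have hG : Measurable G := by
    refine Measurable.prodMk ?_ ?_
    · exact measurable_tsum' _ fun k =>
        (((measurable_pi_apply k).fst.const_mul (γ k)).smul_const (r k))
    · exact measurable_tsum' _ fun k =>
        (((measurable_pi_apply k).snd.const_mul (γ k)).smul_const (r k))
  have e1 : (fun ω => ((∑' k, (γ k * ξ k ω) • r k, ∑' k, (γ k * ζ k ω) • r k) : X × X))
      = G ∘ Φ := rfl
  have e2 : (fun ω => ((∑' k, (γ k * ζ k ω) • r k, ∑' k, (γ k * ξ k ω) • r k) : X × X))
      = G ∘ Ψ := rfl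
  rw [e1, e2, ← Measure.map_map hG hΦ, ← Measure.map_map hG hΨ, key]
end

section
/- Let X be a separable Hilbert space, μ ∈ P(X), and let Q be a probability kernel on X reversible with respect to μ, i.e., Q(u,dv)μ(du) = Q(v,du)μ(dv). Let Ψ: X → ℝ be continuous and locally bounded, let ν be defined by dν/dμ(u) = Z^{-1} exp(-Ψ(u)) with Z = ∫ exp(-Ψ) dμ ∈ (0,∞), and define τ(A) = ∫ Q(u, A_u) dν(u) and τ^⊥(A) = ∫ Q(u, A_u^⊥) dν(u) for Borel A ⊆ X × X, where A_u = {v : (u,v) ∈ A} and A^⊥ = {(u,v) : (v,u) ∈ A}. Then τ^⊥ is absolutely continuous with respect to τ with Radon–Nikodym derivative (u,v) ↦ exp(Ψ(u) - Ψ(v)). -/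
open MeasureTheory ProbabilityTheory
open scoped ENNReal

/-- Composing a density on the first factor with a kernel:
`(μ.withDensity g) ⊗ₘ Q = (μ ⊗ₘ Q).withDensity (g ∘ fst)`. -/
lemma compProd_withDensity_fst {X : Type*} [MeasurableSpace X] (μ : Measure X) [SFinite μ]
    (Q : Kernel X X) [IsMarkovKernel Q] (g : X → ℝ≥0∞) (hg : Measurable g) :
    (μ.withDensity g).compProd Q = (μ.compProd Q).withDensity (fun p => g p.1) := by
  ext s hs
  rw [Measure.compProd_apply hs, withDensity_apply _ hs,
    lintegral_withDensity_eq_lintegral_mul _ hg (Kernel.measurable_kernel_prodMk_left hs),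
    ← lintegral_indicator hs, Measure.lintegral_compProd]
  · congr 1
    ext u
    have : ∀ v, s.indicator (fun p : X × X => g p.1) (u, v)
        = g u * (Prod.mk u ⁻¹' s).indicator (fun _ => 1) v := by
      intro v
      by_cases h : (u, v) ∈ s <;> simp [Set.indicator, h, Set.mem_preimage]
    simp_rw [this]
    rw [lintegral_const_mul _ (measurable_const.indicator (measurable_prodMk_left hs))]
    simp [lintegral_indicator (measurable_prodMk_left hs)]
  · exact (hg.comp measurable_fst).indicator hs

/-- Pushing a density forward along the swap map. -/
lemma map_swap_withDensity {X : Type*} [MeasurableSpace X] (m : Measure (X × X))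
    (f : X × X → ℝ≥0∞) (hf : Measurable f) :
    (m.withDensity f).map Prod.swap = (m.map Prod.swap).withDensity (f ∘ Prod.swap) := by
  ext s hs
  rw [Measure.map_apply measurable_swap hs, withDensity_apply _ (measurable_swap hs),
    withDensity_apply _ hs,
    setLIntegral_map hs (hf.comp measurable_swap) measurable_swap]
  rfl

/-- Tierney's theorem for prior-reversible proposals.  Let `X` be a separable Hilbert space,
`μ` a Borel probability measure on `X`, and `Q` a Markov kernel reversible with respect to `μ`
(i.e. `Q(u,dv)μ(du) = Q(v,du)μ(dv)` as measures on `X × X`).  Let `Ψ : X → ℝ` be continuous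
and locally bounded, let `ν` be defined by `dν/dμ(u) = Z⁻¹ exp(-Ψ(u))` with
`Z = ∫ exp(-Ψ) dμ ∈ (0,∞)`, and set `τ = ν(du) Q(u,dv)` and `τ^⊥` its image under the swap
`(u,v) ↦ (v,u)`.  Then `τ^⊥ ≪ τ` with Radon–Nikodym derivative
`(u,v) ↦ exp(Ψ(u) - Ψ(v))`. -/
theorem prior_reversible_acceptance_ratio
    {X : Type*} [NormedAddCommGroup X] [InnerProductSpace ℝ X] [CompleteSpace X]
    [SecondCountableTopology X] [MeasurableSpace X] [BorelSpace X]
    (μ : Measure X) [IsProbabilityMeasure μ]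
    (Q : Kernel X X) [IsMarkovKernel Q]
    (hrev : (μ.compProd Q).map Prod.swap = μ.compProd Q)
    (Ψ : X → ℝ) (hΨcont : Continuous Ψ)
    (hΨloc : ∀ x : X, ∃ s ∈ nhds x, ∃ C : ℝ, ∀ y ∈ s, |Ψ y| ≤ C)
    (hint : MeasureTheory.Integrable (fun u => Real.exp (-Ψ u)) μ)
    (Z : ℝ) (hZ : Z = ∫ u, Real.exp (-Ψ u) ∂μ) (hZpos : 0 < Z)
    (ν : Measure X)
    (hν : ν = μ.withDensity (fun u => ENNReal.ofReal (Z⁻¹ * Real.exp (-Ψ u))))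
    (τ τperp : Measure (X × X))
    (hτ : τ = ν.compProd Q) (hτperp : τperp = τ.map Prod.swap) :
    τperp ≪ τ ∧
      τperp = τ.withDensity (fun uv => ENNReal.ofReal (Real.exp (Ψ uv.1 - Ψ uv.2))) := by
  have hgmeas : Measurable fun u => ENNReal.ofReal (Z⁻¹ * Real.exp (-Ψ u)) :=
    (ENNReal.measurable_ofReal.comp
      ((measurable_const.mul ((Real.continuous_exp.comp hΨcont.neg).measurable))))
  -- τ as a density w.r.t. μ ⊗ₘ Q
  have hτ' : τ = (μ.compProd Q).withDensity
      (fun p => ENNReal.ofReal (Z⁻¹ * Real.exp (-Ψ p.1))) := by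
    rw [hτ, hν, compProd_withDensity_fst μ Q _ hgmeas]
  -- τperp as a density w.r.t. μ ⊗ₘ Q
  have hτperp' : τperp = (μ.compProd Q).withDensity
      (fun p => ENNReal.ofReal (Z⁻¹ * Real.exp (-Ψ p.2))) := by
    have hm : Measurable fun p : X × X => ENNReal.ofReal (Z⁻¹ * Real.exp (-Ψ p.1)) :=
      hgmeas.comp measurable_fst
    rw [hτperp, hτ', map_swap_withDensity _ _ hm, hrev]
    rfl
  have hhmeas : Measurable fun uv : X × X => ENNReal.ofReal (Real.exp (Ψ uv.1 - Ψ uv.2)) :=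
    (ENNReal.measurable_ofReal.comp
      ((Real.continuous_exp.comp
        ((hΨcont.comp continuous_fst).sub (hΨcont.comp continuous_snd))).measurable))
  have key : τperp = τ.withDensity
      (fun uv => ENNReal.ofReal (Real.exp (Ψ uv.1 - Ψ uv.2))) := by
    have hm : Measurable fun p : X × X => ENNReal.ofReal (Z⁻¹ * Real.exp (-Ψ p.1)) :=
      hgmeas.comp measurable_fst
    rw [hτ', ← withDensity_mul _ hm hhmeas, hτperp']
    congr 1
    ext p
    rw [Pi.mul_apply, ← ENNReal.ofReal_mul (by positivity)]
    congr 1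
    rw [mul_assoc, ← Real.exp_add]
    ring_nf
  exact ⟨key ▸ withDensity_absolutelyContinuous τ _, key⟩
end
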